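/- Let n₁ ≥ n₂ > 0 and β ∈ (0, 1]. For γ ∈ (0, 1), define λ̃₁(γ) as follows: if (4+γ²)/n₁^β ≤ 4γ/n₂^β + (2−γ)²/(n₁+n₂)^β, then λ̃₁(γ) = (n₂/n₁)·((1 − ((4+γ²)/(4γ)) (n₂/n₁)^β (1 − (n₁/(n₁+n₂))^β))^{−1/β} − 1); otherwise λ̃₁(γ) = 1. Then λ̃₁ is nonincreasing in γ on (0, 1): the condition defining the non-unit branch becomes satisfied at a threshold in γ (its defining expression 4γ h₂ − (4+γ²) h₁, with h_i = n_i^{−β} − (n₁+n₂)^{−β}, is increasing in γ), and on the non-unit branch the value is decreasing in γ. -/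

import Mathlib

/-- The leading-order Nash bargaining share `λ̃₁` of the larger firm, as a function of
the substitutability parameter `γ` (with data sizes `n₁ ≥ n₂` and difficulty `β`). -/
noncomputable def lamTilde (n₁ n₂ β γ : ℝ) : ℝ :=
  if (4 + γ ^ 2) / n₁ ^ β ≤ 4 * γ / n₂ ^ β + (2 - γ) ^ 2 / (n₁ + n₂) ^ β then
    (n₂ / n₁) *
      ((1 - ((4 + γ ^ 2) / (4 * γ)) * (n₂ / n₁) ^ β *
          (1 - (n₁ / (n₁ + n₂)) ^ β)) ^ (-(1 / β)) - 1)
  else 1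

set_option maxHeartbeats 1000000 in
/-- **`λ̃₁` is nonincreasing in `γ` (from Theorem 2).** For `n₁ ≥ n₂ > 0` and
`β ∈ (0,1]`, the bargaining share `λ̃₁` is nonincreasing in `γ` on `(0,1)`; moreover the
expression `4γh₂ - (4+γ²)h₁` (with `h_i = n_i^{-β} - (n₁+n₂)^{-β}`) defining the
non-unit branch condition is increasing in `γ`, and on the non-unit branch the value is
decreasing in `γ`. -/
theorem lamTilde_nonincreasing_in_gamma
    (n₁ n₂ β : ℝ) (hn : n₂ ≤ n₁) (hn₂ : 0 < n₂) (hβ₁ : 0 < β) (hβ₂ : β ≤ 1)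
    (h₁ h₂ : ℝ)
    (hh₁ : h₁ = n₁ ^ (-β) - (n₁ + n₂) ^ (-β))
    (hh₂ : h₂ = n₂ ^ (-β) - (n₁ + n₂) ^ (-β)) :
    AntitoneOn (fun γ => lamTilde n₁ n₂ β γ) (Set.Ioo 0 1) ∧
    StrictMonoOn (fun γ => 4 * γ * h₂ - (4 + γ ^ 2) * h₁) (Set.Ioo 0 1) ∧
    ∀ γ γ' : ℝ, γ ∈ Set.Ioo (0 : ℝ) 1 → γ' ∈ Set.Ioo (0 : ℝ) 1 → γ < γ' →
      (4 + γ ^ 2) / n₁ ^ β ≤ 4 * γ / n₂ ^ β + (2 - γ) ^ 2 / (n₁ + n₂) ^ β →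
      (4 + γ' ^ 2) / n₁ ^ β ≤ 4 * γ' / n₂ ^ β + (2 - γ') ^ 2 / (n₁ + n₂) ^ β →
      lamTilde n₁ n₂ β γ' < lamTilde n₁ n₂ β γ := by
  have hn₁ : 0 < n₁ := lt_of_lt_of_le hn₂ hn
  have hs : 0 < n₁ + n₂ := by linarith
  have hβ : β ≠ 0 := ne_of_gt hβ₁
  have pa : 0 < n₁ ^ β := Real.rpow_pos_of_pos hn₁ β
  have pb : 0 < n₂ ^ β := Real.rpow_pos_of_pos hn₂ β
  have ps : 0 < (n₁ + n₂) ^ β := Real.rpow_pos_of_pos hs β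
  -- h₁, h₂ in inverse form
  have hh₁' : h₁ = (n₁ ^ β)⁻¹ - ((n₁ + n₂) ^ β)⁻¹ := by
    rw [hh₁, Real.rpow_neg hn₁.le, Real.rpow_neg hs.le]
  have hh₂' : h₂ = (n₂ ^ β)⁻¹ - ((n₁ + n₂) ^ β)⁻¹ := by
    rw [hh₂, Real.rpow_neg hn₂.le, Real.rpow_neg hs.le]
  have h₁pos : 0 < h₁ := by
    rw [hh₁']
    have : n₁ ^ β < (n₁ + n₂) ^ β :=
      Real.rpow_lt_rpow hn₁.le (by linarith) hβ₁
    have := inv_strictAnti₀ pa this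
    linarith
  have h21 : h₁ ≤ h₂ := by
    rw [hh₁', hh₂']
    have hb : n₂ ^ β ≤ n₁ ^ β := Real.rpow_le_rpow hn₂.le hn hβ₁.le
    have := inv_anti₀ pb hb
    linarith
  -- the gap function equals the branch condition difference
  have hg : ∀ γ : ℝ, 4 * γ * h₂ - (4 + γ ^ 2) * h₁ =
      4 * γ / n₂ ^ β + (2 - γ) ^ 2 / (n₁ + n₂) ^ β - (4 + γ ^ 2) / n₁ ^ β := by
    intro γ
    rw [hh₁', hh₂']
    field_simp
    ring
  have hcond_iff : ∀ γ : ℝ,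
      ((4 + γ ^ 2) / n₁ ^ β ≤ 4 * γ / n₂ ^ β + (2 - γ) ^ 2 / (n₁ + n₂) ^ β) ↔
      0 ≤ 4 * γ * h₂ - (4 + γ ^ 2) * h₁ := by
    intro γ
    rw [hg]
    constructor <;> intro h <;> linarith
  -- strict monotonicity of the gap function
  have hmono : StrictMonoOn (fun γ => 4 * γ * h₂ - (4 + γ ^ 2) * h₁) (Set.Ioo (0:ℝ) 1) := by
    intro γ hγ γ' hγ' hlt
    simp only
    have h1 : 0 < γ' - γ := sub_pos.mpr hlt
    have h2 : γ + γ' < 2 := by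
      have := hγ.2; have := hγ'.2; linarith
    nlinarith [mul_pos h1 h₁pos, mul_nonneg h1.le (sub_nonneg.mpr h21),
      mul_pos (mul_pos h1 h₁pos) (sub_pos.mpr h2)]
  -- the inner product rewrites to n₂^β * h₁
  have hprod : ∀ x : ℝ, x * (n₂ / n₁) ^ β * (1 - (n₁ / (n₁ + n₂)) ^ β)
      = x * (n₂ ^ β * h₁) := by
    intro x
    rw [mul_assoc]
    congr 1
    rw [Real.div_rpow hn₂.le hn₁.le, Real.div_rpow hn₁.le hs.le, hh₁']
    field_simp
  have hK : 0 < n₂ ^ β * h₁ := mul_pos pb h₁pos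
  set q : ℝ := n₂ ^ β * ((n₁ + n₂) ^ β)⁻¹ with hq
  have hqpos : 0 < q := mul_pos pb (inv_pos.mpr ps)
  -- lower bound for U on the branch
  have hUlb : ∀ γ : ℝ, γ ∈ Set.Ioo (0:ℝ) 1 →
      ((4 + γ ^ 2) / n₁ ^ β ≤ 4 * γ / n₂ ^ β + (2 - γ) ^ 2 / (n₁ + n₂) ^ β) →
      q ≤ 1 - (4 + γ ^ 2) / (4 * γ) * (n₂ ^ β * h₁) := by
    intro γ hγ hc
    have hgpos : 0 ≤ 4 * γ * h₂ - (4 + γ ^ 2) * h₁ := (hcond_iff γ).mp hc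
    have h4γ : 0 < 4 * γ := by linarith [hγ.1]
    have hq1 : (4 + γ ^ 2) / (4 * γ) * h₁ ≤ h₂ := by
      rw [div_mul_eq_mul_div, div_le_iff₀ h4γ]
      nlinarith
    have hq2 : n₂ ^ β * ((4 + γ ^ 2) / (4 * γ) * h₁) ≤ n₂ ^ β * h₂ :=
      mul_le_mul_of_nonneg_left hq1 pb.le
    have hq3 : n₂ ^ β * h₂ = 1 - q := by
      rw [hh₂', hq]
      field_simp
    nlinarith
  have hUpos : ∀ γ : ℝ, γ ∈ Set.Ioo (0:ℝ) 1 →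
      ((4 + γ ^ 2) / n₁ ^ β ≤ 4 * γ / n₂ ^ β + (2 - γ) ^ 2 / (n₁ + n₂) ^ β) →
      0 < 1 - (4 + γ ^ 2) / (4 * γ) * (n₂ ^ β * h₁) := fun γ hγ hc =>
    lt_of_lt_of_le hqpos (hUlb γ hγ hc)
  -- q ^ (1/β) = n₂ / (n₁ + n₂)
  have hqrt : q ^ (1 / β) = n₂ / (n₁ + n₂) := by
    have : q = (n₂ / (n₁ + n₂)) ^ β := by
      rw [Real.div_rpow hn₂.le hs.le, hq, div_eq_mul_inv]
    rw [this, ← Real.rpow_mul (div_nonneg hn₂.le hs.le), mul_one_div_cancel hβ,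
      Real.rpow_one]
  -- value on the branch is at most 1
  have hle_one : ∀ γ : ℝ, γ ∈ Set.Ioo (0:ℝ) 1 →
      ((4 + γ ^ 2) / n₁ ^ β ≤ 4 * γ / n₂ ^ β + (2 - γ) ^ 2 / (n₁ + n₂) ^ β) →
      lamTilde n₁ n₂ β γ ≤ 1 := by
    intro γ hγ hc
    have hU := hUpos γ hγ hc
    have hUlb' := hUlb γ hγ hc
    unfold lamTilde
    rw [if_pos hc, hprod]
    set U : ℝ := 1 - (4 + γ ^ 2) / (4 * γ) * (n₂ ^ β * h₁) with hUdef
    have h1 : q ^ (1 / β) ≤ U ^ (1 / β) :=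
      Real.rpow_le_rpow hqpos.le hUlb' (by positivity)
    have h2 : (U ^ (1 / β))⁻¹ ≤ (q ^ (1 / β))⁻¹ :=
      inv_anti₀ (by positivity) h1
    rw [hqrt, inv_div] at h2
    have h3 : U ^ (-(1 / β)) = (U ^ (1 / β))⁻¹ := Real.rpow_neg hU.le _
    rw [h3]
    have h4 : (n₂ / n₁) * ((U ^ (1 / β))⁻¹ - 1) ≤ (n₂ / n₁) * ((n₁ + n₂) / n₂ - 1) :=
      mul_le_mul_of_nonneg_left (by linarith) (by positivity)
    have h5 : (n₂ / n₁) * ((n₁ + n₂) / n₂ - 1) = 1 := by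
      field_simp
      ring
    linarith
  -- strict decrease on the branch
  have hstrict : ∀ γ γ' : ℝ, γ ∈ Set.Ioo (0 : ℝ) 1 → γ' ∈ Set.Ioo (0 : ℝ) 1 → γ < γ' →
      (4 + γ ^ 2) / n₁ ^ β ≤ 4 * γ / n₂ ^ β + (2 - γ) ^ 2 / (n₁ + n₂) ^ β →
      (4 + γ' ^ 2) / n₁ ^ β ≤ 4 * γ' / n₂ ^ β + (2 - γ') ^ 2 / (n₁ + n₂) ^ β →
      lamTilde n₁ n₂ β γ' < lamTilde n₁ n₂ β γ := by
    intro γ γ' hγ hγ' hlt hc hc'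
    have hU := hUpos γ hγ hc
    have hU' := hUpos γ' hγ' hc'
    unfold lamTilde
    rw [if_pos hc, if_pos hc', hprod, hprod]
    set U : ℝ := 1 - (4 + γ ^ 2) / (4 * γ) * (n₂ ^ β * h₁) with hUdef
    set U' : ℝ := 1 - (4 + γ' ^ 2) / (4 * γ') * (n₂ ^ β * h₁) with hU'def
    have h4 : 0 < 4 - γ * γ' := by nlinarith [hγ.1, hγ.2, hγ'.1, hγ'.2]
    have hf : (4 + γ' ^ 2) / (4 * γ') < (4 + γ ^ 2) / (4 * γ) := by
      rw [div_lt_div_iff₀ (by linarith [hγ'.1]) (by linarith [hγ.1])]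
      nlinarith [mul_pos (sub_pos.mpr hlt) h4]
    have hUU : U < U' := by
      have := mul_lt_mul_of_pos_right hf hK
      simp only [hUdef, hU'def]
      linarith
    have h1 : U ^ (1 / β) < U' ^ (1 / β) :=
      Real.rpow_lt_rpow hU.le hUU (by positivity)
    have h2 : (U' ^ (1 / β))⁻¹ < (U ^ (1 / β))⁻¹ :=
      inv_strictAnti₀ (by positivity) h1
    rw [Real.rpow_neg hU.le, Real.rpow_neg hU'.le]
    have : 0 < n₂ / n₁ := by positivity
    exact mul_lt_mul_of_pos_left (by linarith) this
  refine ⟨?_, hmono, hstrict⟩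
  -- Antitone part
  intro γ hγ γ' hγ' hle
  rcases eq_or_lt_of_le hle with rfl | hlt
  · exact le_refl _
  · by_cases hc : (4 + γ ^ 2) / n₁ ^ β ≤ 4 * γ / n₂ ^ β + (2 - γ) ^ 2 / (n₁ + n₂) ^ β
    · by_cases hc' : (4 + γ' ^ 2) / n₁ ^ β ≤ 4 * γ' / n₂ ^ β + (2 - γ') ^ 2 / (n₁ + n₂) ^ β
      · exact le_of_lt (hstrict γ γ' hγ hγ' hlt hc hc')
      · exfalso
        apply hc'
        rw [hcond_iff]
        have := hmono hγ hγ' hlt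
        have h0 : (0:ℝ) ≤ 4 * γ * h₂ - (4 + γ ^ 2) * h₁ := (hcond_iff γ).mp hc
        simp only at this
        linarith
    · by_cases hc' : (4 + γ' ^ 2) / n₁ ^ β ≤ 4 * γ' / n₂ ^ β + (2 - γ') ^ 2 / (n₁ + n₂) ^ β
      · have h1 : lamTilde n₁ n₂ β γ = 1 := by unfold lamTilde; rw [if_neg hc]
        simp only [h1]
        exact hle_one γ' hγ' hc'
      · have h1 : lamTilde n₁ n₂ β γ = 1 := by unfold lamTilde; rw [if_neg hc]
        have h2 : lamTilde n₁ n₂ β γ' = 1 := by unfold lamTilde; rw [if_neg hc']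
        simp only [h1, h2, le_refl]
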